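/- Let γ1, γ2, λ1, λ2 be real numbers with λ1 ≠ 0 and λ2 ≠ 0, and for k ∈ ℝ let H(k) := γ1 σ1 + γ2 σ2 + λ1 cos(k) σ1 + λ2 sin(k) σ2 ∈ M_2(ℂ). Then H(k) is invertible for every k ∈ ℝ if and only if (γ1/λ1)² + (γ2/λ2)² ≠ 1. -/
import Mathlib


set_option maxHeartbeats 1000000
set_option synthInstance.maxHeartbeats 400000

noncomputable section
open scoped ENNReal Classical

open Matrix in
/-- The Pauli matrix `σ₁`. -/
def sigma1 : Matrix (Fin 2) (Fin 2) ℂ := !![0, 1; 1, 0]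
open Matrix in
/-- The Pauli matrix `σ₂`. -/
def sigma2 : Matrix (Fin 2) (Fin 2) ℂ := !![0, -Complex.I; Complex.I, 0]
open Matrix in
/-- The Pauli matrix `σ₃`. -/
def sigma3 : Matrix (Fin 2) (Fin 2) ℂ := !![1, 0; 0, -1]

lemma exists_angle (x y : ℝ) (h : x^2 + y^2 = 1) :
    ∃ θ : ℝ, Real.cos θ = x ∧ Real.sin θ = y := by
  have hx1 : -1 ≤ x := by nlinarith [sq_nonneg y, sq_nonneg (x+1)]
  have hx2 : x ≤ 1 := by nlinarith [sq_nonneg y, sq_nonneg (x-1)]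
  rcases le_or_gt 0 y with hy | hy
  · refine ⟨Real.arccos x, Real.cos_arccos hx1 hx2, ?_⟩
    rw [Real.sin_arccos, show (1:ℝ) - x^2 = y^2 by linarith, Real.sqrt_sq hy]
  · refine ⟨-Real.arccos x, by simp [Real.cos_arccos hx1 hx2], ?_⟩
    rw [Real.sin_neg, Real.sin_arccos, show (1:ℝ) - x^2 = y^2 by linarith,
      Real.sqrt_sq_eq_abs, abs_of_neg hy, neg_neg]

/-- The 1-D class AIII bulk Hamiltonian
`H(k) = γ₁σ₁ + γ₂σ₂ + λ₁cos(k)σ₁ + λ₂sin(k)σ₂` is invertible for all `k` iff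
`(γ₁/λ₁)² + (γ₂/λ₂)² ≠ 1`. -/
theorem oneD_AIII_gapped_iff (γ1 γ2 lam1 lam2 : ℝ) (h1 : lam1 ≠ 0) (h2 : lam2 ≠ 0) :
    (∀ k : ℝ, IsUnit ((γ1 : ℂ) • sigma1 + (γ2 : ℂ) • sigma2 +
      ((lam1 * Real.cos k : ℝ) : ℂ) • sigma1 + ((lam2 * Real.sin k : ℝ) : ℂ) • sigma2)) ↔
    (γ1/lam1)^2 + (γ2/lam2)^2 ≠ 1 := by
  have key : ∀ k : ℝ, IsUnit ((γ1 : ℂ) • sigma1 + (γ2 : ℂ) • sigma2 +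
      ((lam1 * Real.cos k : ℝ) : ℂ) • sigma1 + ((lam2 * Real.sin k : ℝ) : ℂ) • sigma2) ↔
      ¬(γ1 + lam1 * Real.cos k = 0 ∧ γ2 + lam2 * Real.sin k = 0) := by
    intro k
    rw [Matrix.isUnit_iff_isUnit_det, isUnit_iff_ne_zero]
    have hdet : ((γ1 : ℂ) • sigma1 + (γ2 : ℂ) • sigma2 +
        ((lam1 * Real.cos k : ℝ) : ℂ) • sigma1 + ((lam2 * Real.sin k : ℝ) : ℂ) • sigma2).det
        = -(((γ1 + lam1 * Real.cos k : ℝ) : ℂ)^2 + ((γ2 + lam2 * Real.sin k : ℝ) : ℂ)^2) := by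
      simp [sigma1, sigma2, Matrix.det_fin_two, Matrix.smul_apply]
      push_cast
      ring_nf
      rw [Complex.I_sq]
      ring
    rw [hdet, neg_ne_zero,
      show (((γ1 + lam1 * Real.cos k : ℝ) : ℂ)^2 + ((γ2 + lam2 * Real.sin k : ℝ) : ℂ)^2)
        = (((γ1 + lam1 * Real.cos k)^2 + (γ2 + lam2 * Real.sin k)^2 : ℝ) : ℂ) by push_cast; ring,
      Complex.ofReal_ne_zero]
    constructor
    · intro h hc
      exact h (by rw [hc.1, hc.2]; ring)
    · intro h hc
      exact h ⟨by nlinarith [sq_nonneg (γ1 + lam1 * Real.cos k), sq_nonneg (γ2 + lam2 * Real.sin k)],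
        by nlinarith [sq_nonneg (γ1 + lam1 * Real.cos k), sq_nonneg (γ2 + lam2 * Real.sin k)]⟩
  simp only [key]
  constructor
  · intro h heq
    obtain ⟨θ, hc, hs⟩ := exists_angle (-γ1/lam1) (-γ2/lam2)
      (by rw [show (-γ1/lam1)^2 = (γ1/lam1)^2 by ring, show (-γ2/lam2)^2 = (γ2/lam2)^2 by ring]; exact heq)
    exact h θ ⟨by rw [hc]; field_simp; ring, by rw [hs]; field_simp; ring⟩
  · intro h k ⟨ha, hb⟩
    apply h
    have hc : γ1 / lam1 = -Real.cos k := by field_simp; linarith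
    have hs : γ2 / lam2 = -Real.sin k := by field_simp; linarith
    rw [hc, hs]
    have := Real.sin_sq_add_cos_sq k
    ring_nf
    linarith

end
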